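/- Let ρ be a metric on the closed orthant S̄ = [0,∞) such that there is c > 0 with c|√x - √y| ≤ ρ(x,y) ≤ c^{-1}|√x - √y| for x, y ∈ [0,1], and c|x - y| ≤ ρ(x,y) ≤ c^{-1}|x - y| for x, y ∈ [1,∞). Then for every β > 0 there exist constants 0 < C₁ ≤ C₂ and r₀ > 0 such that for all x⁰ ∈ [0, r₀] and r ∈ (0, r₀/2), the weighted measure μ(B_r(x⁰)) = ∫_{B_r(x⁰)} x^{β-1} dx of the metric ball B_r(x⁰) = {x ≥ 0 : ρ(x⁰,x) < r} satisfies C₁ r (max(√x⁰, r))^{2β-1} ≤ μ(B_r(x⁰)) ≤ C₂ r (max(√x⁰, r))^{2β-1}. -/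

import Mathlib

open MeasureTheory Real

set_option maxHeartbeats 1000000 in
/-- Core estimate: if `u - l` is comparable to `s` and `u` comparable to `m`,
then `u^p - l^p` is comparable to `s * m^(p-1)`. -/
lemma kimura_core (p : ℝ) (hp : 0 < p) {l u s m : ℝ} (hl : 0 ≤ l)
    (hsu : s ≤ u - l) (hus : u - l ≤ 2 * s) (hm : 0 < m) (hmu : m ≤ u)
    (hum : u ≤ 2 * m) (hs : 0 < s) :
    p / (4 * 2 ^ p) * (s * m ^ (p - 1)) ≤ u ^ p - l ^ p ∧
      u ^ p - l ^ p ≤ (p * 2 ^ p + 4) * (s * m ^ (p - 1)) := by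
  have hu : 0 < u := lt_of_lt_of_le hm hmu
  have hlu : l ≤ u := by linarith
  have h2p : (0:ℝ) < 2 ^ p := Real.rpow_pos_of_pos (by norm_num) p
  have hmp : (0:ℝ) < m ^ (p - 1) := Real.rpow_pos_of_pos hm _
  have hup : (0:ℝ) < u ^ (p - 1) := Real.rpow_pos_of_pos hu _
  -- interval integral representation
  have hint : IntervalIntegrable (fun x : ℝ => x ^ (p - 1)) volume l u :=
    intervalIntegral.intervalIntegrable_rpow' (by linarith)
  have hIoc : IntegrableOn (fun x : ℝ => x ^ (p - 1)) (Set.Ioc l u) volume :=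
    (intervalIntegrable_iff_integrableOn_Ioc_of_le hlu).mp hint
  have hrep : u ^ p - l ^ p = p * ∫ t in Set.Ioc l u, t ^ (p - 1) := by
    have := integral_rpow (a := l) (b := u) (r := p - 1) (Or.inl (by linarith))
    rw [intervalIntegral.integral_of_le hlu] at this
    rw [this]
    rw [sub_add_cancel, mul_div_assoc', mul_div_cancel_left₀ _ hp.ne']
  -- u^(p-1) vs m^(p-1)
  have hhalf : (1/2 : ℝ) * m ^ (p-1) ≤ u ^ (p-1) := by
    rcases le_or_gt 1 p with h1 | h1
    · have : m ^ (p-1) ≤ u ^ (p-1) := Real.rpow_le_rpow hm.le hmu (by linarith)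
      nlinarith
    · have : (2*m) ^ (p-1) ≤ u ^ (p-1) :=
        Real.rpow_le_rpow_of_nonpos hu hum (by linarith)
      have h2 : (2*m) ^ (p-1) = 2 ^ (p-1) * m ^ (p-1) :=
        Real.mul_rpow (by norm_num) hm.le
      have h3 : (1/2:ℝ) ≤ 2 ^ (p-1) := by
        have : (2:ℝ) ^ (-1:ℝ) ≤ 2 ^ (p-1) :=
          Real.rpow_le_rpow_left_iff (by norm_num) |>.mpr (by linarith)
        rw [Real.rpow_neg_one] at this
        linarith
      nlinarith
  constructor
  · -- LOWER bound
    set a := u - s/2 with ha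
    have hla : l ≤ a := by simp only [ha]; linarith
    have hau : a ≤ u := by simp only [ha]; linarith
    have hsub : ∫ t in Set.Ioc a u, t ^ (p-1) ≤ ∫ t in Set.Ioc l u, t ^ (p-1) := by
      apply setIntegral_mono_set hIoc
      · filter_upwards [ae_restrict_mem measurableSet_Ioc] with t ht
        exact Real.rpow_nonneg (le_trans hl ht.1.le) _
      · exact Filter.Eventually.of_forall (fun t ht => ⟨lt_of_le_of_lt hla ht.1, ht.2⟩)
    have hDl : ∀ t ∈ Set.Ioc a u, (2 ^ p)⁻¹ * u ^ (p-1) ≤ t ^ (p-1) := by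
      intro t ht
      have htpos : 0 < t := lt_of_le_of_lt (by simp only [ha]; nlinarith [hsu, hl] : (0:ℝ) ≤ a) ht.1
      rcases le_or_gt 1 p with h1 | h1
      · -- t ≥ u/2, increasing integrand
        have htu2 : u/2 ≤ t := by
          have : u - l ≥ s := hsu
          have hsu2 : s ≤ u := by linarith
          simp only [ha] at ht; linarith [ht.1]
        have : (u/2) ^ (p-1) ≤ t ^ (p-1) :=
          Real.rpow_le_rpow (by linarith) htu2 (by linarith)
        have h2 : (u/2) ^ (p-1) = u ^ (p-1) / 2 ^ (p-1) :=
          Real.div_rpow hu.le (by norm_num) _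
        have h3 : (2:ℝ) ^ (p-1) ≤ 2 ^ p :=
          Real.rpow_le_rpow_left_iff (by norm_num) |>.mpr (by linarith)
        have h4 : u ^ (p-1) / 2 ^ p ≤ u ^ (p-1) / 2 ^ (p-1) :=
          div_le_div_of_nonneg_left hup.le (Real.rpow_pos_of_pos (by norm_num) _) h3
        rw [div_eq_inv_mul] at h4
        linarith [h2 ▸ this, h4]
      · -- decreasing integrand, t ≤ u
        have : u ^ (p-1) ≤ t ^ (p-1) :=
          Real.rpow_le_rpow_of_nonpos htpos ht.2 (by linarith)
        have h5 : (2 ^ p)⁻¹ * u ^ (p-1) ≤ u ^ (p-1) := by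
          have h1p : (2:ℝ)^(0:ℝ) ≤ 2^p :=
            Real.rpow_le_rpow_left_iff (by norm_num) |>.mpr hp.le
          rw [Real.rpow_zero] at h1p
          rw [inv_mul_le_iff₀ (by linarith)]
          nlinarith
        linarith
    have hconst : ∫ t in Set.Ioc a u, ((2 ^ p)⁻¹ * u ^ (p-1)) ≤ ∫ t in Set.Ioc a u, t ^ (p-1) := by
      apply setIntegral_mono_on
      · exact integrableOn_const (by rw [Real.volume_Ioc]; exact ENNReal.ofReal_ne_top)
      · exact hIoc.mono_set (fun t ht => ⟨lt_of_le_of_lt hla ht.1, ht.2⟩)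
      · exact measurableSet_Ioc
      · exact hDl
    have hconstval : ∫ t in Set.Ioc a u, ((2 ^ p)⁻¹ * u ^ (p-1)) = (s/2) * ((2 ^ p)⁻¹ * u ^ (p-1)) := by
      rw [setIntegral_const, Real.volume_real_Ioc_of_le hau, smul_eq_mul]
      simp only [ha]; ring_nf
    have key : (s/2) * ((2 ^ p)⁻¹ * u ^ (p-1)) ≤ ∫ t in Set.Ioc l u, t ^ (p-1) := by
      rw [← hconstval]; exact le_trans hconst hsub
    rw [hrep]
    have : p / (4 * 2 ^ p) * (s * m ^ (p-1)) ≤ p * ((s/2) * ((2 ^ p)⁻¹ * u ^ (p-1))) := by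
      rw [div_mul_eq_mul_div, div_le_iff₀ (by positivity)]
      have e1 : p * (s/2 * ((2 ^ p)⁻¹ * u ^ (p-1))) * (4 * 2 ^ p) = 2*p*s*u^(p-1) := by
        field_simp
        ring
      rw [e1]
      have e2 := mul_le_mul_of_nonneg_left hhalf (by positivity : (0:ℝ) ≤ 2*(p*s))
      nlinarith [e2]
    calc p / (4 * 2 ^ p) * (s * m ^ (p-1)) ≤ p * ((s/2) * ((2 ^ p)⁻¹ * u ^ (p-1))) := this
      _ ≤ p * ∫ t in Set.Ioc l u, t ^ (p-1) := by
          apply mul_le_mul_of_nonneg_left key hp.le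
  · -- UPPER bound
    rcases le_or_gt 1 p with h1 | h1
    · -- increasing: integrand ≤ (2m)^(p-1)
      have hbd : ∀ t ∈ Set.Ioc l u, t ^ (p-1) ≤ (2*m) ^ (p-1) := fun t ht =>
        Real.rpow_le_rpow (le_trans hl ht.1.le) (le_trans ht.2 hum) (by linarith)
      have hconst : ∫ t in Set.Ioc l u, t ^ (p-1) ≤ ∫ t in Set.Ioc l u, ((2*m) ^ (p-1)) :=
        setIntegral_mono_on hIoc
          (integrableOn_const (by rw [Real.volume_Ioc]; exact ENNReal.ofReal_ne_top))
          measurableSet_Ioc hbd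
      have hval : ∫ t in Set.Ioc l u, ((2*m) ^ (p-1) : ℝ) = (u - l) * (2*m) ^ (p-1) := by
        rw [setIntegral_const, Real.volume_real_Ioc_of_le hlu, smul_eq_mul]
      have h2m : (2*m) ^ (p-1) = 2^(p-1) * m^(p-1) := Real.mul_rpow (by norm_num) hm.le
      have h3 : (2:ℝ) ^ (p-1) ≤ 2 ^ p :=
        Real.rpow_le_rpow_left_iff (by norm_num) |>.mpr (by linarith)
      rw [hrep]
      calc p * ∫ t in Set.Ioc l u, t ^ (p-1) ≤ p * ((u - l) * (2*m)^(p-1)) := by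
            apply mul_le_mul_of_nonneg_left _ hp.le
            rw [← hval]; exact hconst
        _ ≤ (p * 2^p + 4) * (s * m^(p-1)) := by
            rw [h2m]
            have h2e : (2:ℝ) * 2^(p-1) = 2^p := by
              rw [show p = 1 + (p-1) by ring]
              rw [Real.rpow_add (by norm_num : (0:ℝ)<2), Real.rpow_one]
              ring_nf
            have hA : p * ((u-l)*(2^(p-1)*m^(p-1))) ≤ p * ((2*s)*(2^(p-1)*m^(p-1))) := by
              apply mul_le_mul_of_nonneg_left _ hp.le
              apply mul_le_mul_of_nonneg_right hus (by positivity)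
            have hB : p * ((2*s)*(2^(p-1)*m^(p-1))) = p*2^p*(s*m^(p-1)) := by
              rw [← h2e]; ring
            nlinarith [mul_pos hs hmp]
    · rcases le_or_gt (u/2) l with h2 | h2
      · -- l ≥ u/2 > 0, decreasing integrand ≤ l^(p-1) ≤ (u/2)^(p-1) ≤ ... ≤ 2 m^(p-1)
        have hlpos : 0 < l := by linarith
        have hbd : ∀ t ∈ Set.Ioc l u, t ^ (p-1) ≤ 2 * m ^ (p-1) := by
          intro t ht
          have h4 : t ^ (p-1) ≤ (m/2) ^ (p-1) := by
            apply Real.rpow_le_rpow_of_nonpos (by linarith) _ (by linarith)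
            calc m/2 ≤ u/2 := by linarith
              _ ≤ l := h2
              _ ≤ t := ht.1.le
          have h5 : (m/2) ^ (p-1) = m^(p-1) / 2^(p-1) := Real.div_rpow hm.le (by norm_num) _
          have h6 : (1/2:ℝ) ≤ 2 ^ (p-1) := by
            have : (2:ℝ) ^ (-1:ℝ) ≤ 2 ^ (p-1) :=
              Real.rpow_le_rpow_left_iff (by norm_num) |>.mpr (by linarith)
            rw [Real.rpow_neg_one] at this; linarith
          have h7 : m^(p-1)/2^(p-1) ≤ 2 * m^(p-1) := by
            rw [div_le_iff₀ (by positivity)]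
            nlinarith
          linarith [h5 ▸ h4]
        have hconst : ∫ t in Set.Ioc l u, t ^ (p-1) ≤ ∫ t in Set.Ioc l u, (2 * m ^ (p-1) : ℝ) :=
          setIntegral_mono_on hIoc
            (integrableOn_const (by rw [Real.volume_Ioc]; exact ENNReal.ofReal_ne_top))
            measurableSet_Ioc hbd
        have hval : ∫ t in Set.Ioc l u, (2 * m ^ (p-1) : ℝ) = (u - l) * (2 * m^(p-1)) := by
          rw [setIntegral_const, Real.volume_real_Ioc_of_le hlu, smul_eq_mul]
        rw [hrep]
        calc p * ∫ t in Set.Ioc l u, t ^ (p-1) ≤ p * ((u-l) * (2 * m^(p-1))) := by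
              apply mul_le_mul_of_nonneg_left _ hp.le
              rw [← hval]; exact hconst
          _ ≤ (p * 2^p + 4) * (s * m^(p-1)) := by
              nlinarith [mul_le_mul_of_nonneg_left (mul_le_mul_of_nonneg_right hus
                  (by positivity : (0:ℝ) ≤ 2*m^(p-1))) hp.le,
                mul_pos hs hmp, mul_pos h2p (mul_pos hs hmp)]
      · -- l < u/2, so u ≤ 4s; use u^p - l^p ≤ u^p = u * u^(p-1) ≤ 4s * m^(p-1)
        have hu4s : u ≤ 4 * s := by linarith
        have hlp : (0:ℝ) ≤ l ^ p := Real.rpow_nonneg hl _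
        have hexp : (1:ℝ) + (p-1) = p := by ring
        have hupp : u ^ p = u * u ^ (p-1) := by
          conv_lhs => rw [← hexp]
          rw [Real.rpow_add hu, Real.rpow_one]
        have humm : u ^ (p-1) ≤ m ^ (p-1) :=
          Real.rpow_le_rpow_of_nonpos hm hmu (by linarith)
        have : u ^ p ≤ 4 * s * m ^ (p-1) := by
          rw [hupp]
          calc u * u^(p-1) ≤ (4*s) * u^(p-1) := mul_le_mul_of_nonneg_right hu4s hup.le
            _ ≤ (4*s) * m^(p-1) := mul_le_mul_of_nonneg_left humm (by linarith)
        nlinarith [mul_pos hs hmp, mul_pos hp (mul_pos hs hmp)]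

/-- Evaluation of the weighted integral over `Ioc (l^2) (u^2)`. -/
lemma kimura_eval (β : ℝ) (hβ : 0 < β) {l u : ℝ} (hl : 0 ≤ l) (hlu : l ≤ u) :
    (∫ x in Set.Ioc (l^2) (u^2), x ^ (β - 1)) = (u ^ (2*β) - l ^ (2*β)) / β := by
  have hu : 0 ≤ u := le_trans hl hlu
  have hsq : l^2 ≤ u^2 := by nlinarith
  rw [← intervalIntegral.integral_of_le hsq,
    integral_rpow (Or.inl (by linarith : (-1:ℝ) < β - 1))]
  have h1 : ((u^2 : ℝ)) ^ (β - 1 + 1) = u ^ (2*β) := by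
    rw [← Real.rpow_natCast u 2, ← Real.rpow_mul hu]
    norm_num
  have h2 : ((l^2 : ℝ)) ^ (β - 1 + 1) = l ^ (2*β) := by
    rw [← Real.rpow_natCast l 2, ← Real.rpow_mul hl]
    norm_num
  rw [h1, h2]
  norm_num

set_option maxHeartbeats 2000000 in
/-- Measure of metric balls for the one-dimensional Kimura intrinsic metric: if `ρ` is a
metric on `[0,∞)` comparable to the square-root distance on `[0,1]` and to the Euclidean
distance on `[1,∞)`, then for each `β > 0` the weighted measure `μ(B_r(x⁰)) = ∫_{B_r(x⁰)}
x^{β-1} dx` is comparable to `r (max(√x⁰, r))^{2β-1}` for `x⁰ ∈ [0,r₀]`, `r ∈ (0,r₀/2)`. -/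
theorem measure_of_balls_kimura (ρ : ℝ → ℝ → ℝ)
    (hsymm : ∀ x ∈ Set.Ici (0:ℝ), ∀ y ∈ Set.Ici (0:ℝ), ρ x y = ρ y x)
    (hnonneg : ∀ x ∈ Set.Ici (0:ℝ), ∀ y ∈ Set.Ici (0:ℝ), 0 ≤ ρ x y)
    (hself : ∀ x ∈ Set.Ici (0:ℝ), ρ x x = 0)
    (hsep : ∀ x ∈ Set.Ici (0:ℝ), ∀ y ∈ Set.Ici (0:ℝ), ρ x y = 0 → x = y)
    (htri : ∀ x ∈ Set.Ici (0:ℝ), ∀ y ∈ Set.Ici (0:ℝ), ∀ z ∈ Set.Ici (0:ℝ),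
      ρ x z ≤ ρ x y + ρ y z)
    (c : ℝ) (hc : 0 < c)
    (hcomp1 : ∀ x ∈ Set.Icc (0:ℝ) 1, ∀ y ∈ Set.Icc (0:ℝ) 1,
      c * |Real.sqrt x - Real.sqrt y| ≤ ρ x y ∧ ρ x y ≤ c⁻¹ * |Real.sqrt x - Real.sqrt y|)
    (hcomp2 : ∀ x ∈ Set.Ici (1:ℝ), ∀ y ∈ Set.Ici (1:ℝ),
      c * |x - y| ≤ ρ x y ∧ ρ x y ≤ c⁻¹ * |x - y|) :
    ∀ β : ℝ, 0 < β → ∃ C₁ C₂ r₀ : ℝ, 0 < C₁ ∧ C₁ ≤ C₂ ∧ 0 < r₀ ∧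
      ∀ x0 ∈ Set.Icc (0:ℝ) r₀, ∀ r ∈ Set.Ioo (0:ℝ) (r₀ / 2),
        C₁ * r * (max (Real.sqrt x0) r) ^ (2 * β - 1)
            ≤ (∫ x in {x : ℝ | 0 ≤ x ∧ ρ x0 x < r}, x ^ (β - 1)) ∧
        (∫ x in {x : ℝ | 0 ≤ x ∧ ρ x0 x < r}, x ^ (β - 1))
            ≤ C₂ * r * (max (Real.sqrt x0) r) ^ (2 * β - 1) := by
  intro β hβ
  have hcinv : (0:ℝ) < c⁻¹ := inv_pos.mpr hc
  have hmem0 : (0:ℝ) ∈ Set.Ici (0:ℝ) := Set.mem_Ici.mpr (le_refl 0)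
  have hmem1 : (1:ℝ) ∈ Set.Ici (0:ℝ) := by norm_num
  have h0Icc : (0:ℝ) ∈ Set.Icc (0:ℝ) 1 := by norm_num
  have h1Icc : (1:ℝ) ∈ Set.Icc (0:ℝ) 1 := by norm_num
  -- `c ≤ 1`
  have hρ01 := hcomp1 0 h0Icc 1 h1Icc
  rw [Real.sqrt_zero, Real.sqrt_one] at hρ01
  have habs01 : |(0:ℝ) - 1| = 1 := by norm_num
  rw [habs01, mul_one, mul_one] at hρ01
  have hcc : c * c⁻¹ = 1 := mul_inv_cancel₀ hc.ne'
  have hc1 : c ≤ 1 := by nlinarith [le_trans hρ01.1 hρ01.2]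
  have hcinv1 : (1:ℝ) ≤ c⁻¹ := one_le_inv_iff₀.mpr ⟨hc, hc1⟩
  -- the function `f = ρ 0 ·` is positive on `[1, ∞)`, uniformly
  set M : ℝ := 1 + 2 / (c * c) with hM
  have hM1 : (1:ℝ) ≤ M := by
    have : 0 < 2 / (c*c) := by positivity
    simp only [hM]; linarith
  have hlip : ∀ x ∈ Set.Ici (1:ℝ), ∀ y ∈ Set.Ici (1:ℝ),
      |ρ 0 x - ρ 0 y| ≤ c⁻¹ * |x - y| := by
    intro x hx y hy
    have hx0 : x ∈ Set.Ici (0:ℝ) := le_trans (by norm_num : (0:ℝ) ≤ 1) hx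
    have hy0 : y ∈ Set.Ici (0:ℝ) := le_trans (by norm_num : (0:ℝ) ≤ 1) hy
    have hxy := (hcomp2 x hx y hy).2
    have hyx := (hcomp2 y hy x hx).2
    rw [abs_sub_le_iff]
    constructor
    · have := htri 0 hmem0 y hy0 x hx0
      have h2 : ρ y x ≤ c⁻¹ * |x - y| := by rwa [abs_sub_comm] at hyx
      linarith
    · have := htri 0 hmem0 x hx0 y hy0
      linarith
  have hcont : ContinuousOn (fun x => ρ 0 x) (Set.Icc 1 M) := by
    apply LipschitzOnWith.continuousOn (K := (⟨c⁻¹, hcinv.le⟩ : NNReal))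
    apply LipschitzOnWith.of_dist_le_mul
    intro x hx y hy
    rw [Real.dist_eq, Real.dist_eq]
    exact hlip x (Set.mem_Ici.mpr hx.1) y (Set.mem_Ici.mpr hy.1)
  obtain ⟨xm, hxmmem, hxmmin⟩ := isCompact_Icc.exists_isMinOn
    ⟨1, Set.mem_Icc.mpr ⟨le_refl 1, hM1⟩⟩ hcont
  have hxm0 : xm ∈ Set.Ici (0:ℝ) := le_trans (by norm_num) hxmmem.1
  have hι₀pos : 0 < ρ 0 xm := by
    rcases lt_or_eq_of_le (hnonneg 0 hmem0 xm hxm0) with h | h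
    · exact h
    · exfalso
      have := hsep 0 hmem0 xm hxm0 h.symm
      have := hxmmem.1
      linarith [this]
  set ι : ℝ := min (ρ 0 xm) c⁻¹ with hι
  have hιpos : 0 < ι := lt_min hι₀pos hcinv
  have hιc : ι ≤ c⁻¹ := min_le_right _ _
  -- uniform lower bound for `ρ 0 x` on `[1, ∞)`
  have hfar : ∀ x ∈ Set.Ici (1:ℝ), ι ≤ ρ 0 x := by
    intro x hx
    rcases le_or_gt x M with hxM | hxM
    · exact le_trans (min_le_left _ _) (isMinOn_iff.mp hxmmin x ⟨hx, hxM⟩)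
    · have hx0 : x ∈ Set.Ici (0:ℝ) := le_trans (by norm_num : (0:ℝ) ≤ 1) hx
      have htr := htri 1 (by norm_num : (1:ℝ) ∈ Set.Ici (0:ℝ)) 0 hmem0 x hx0
      have h10 : ρ 1 0 = ρ 0 1 := hsymm 1 (by norm_num) 0 hmem0
      have hlow := (hcomp2 1 (Set.mem_Ici.mpr (le_refl 1)) x hx).1
      have habs : |1 - x| = x - 1 := by
        rw [abs_sub_comm]; exact abs_of_nonneg (by linarith [hx])
      rw [habs] at hlow
      have hcM : 2 * c⁻¹ ≤ c * (x - 1) := by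
        have h1 : 2 / (c*c) < x - 1 := by simp only [hM] at hxM; linarith
        have h2 : c * (2 / (c*c)) = 2 * c⁻¹ := by field_simp
        nlinarith
      have : c⁻¹ ≤ ρ 0 x := by linarith [hρ01.2]
      linarith [hιc]
  -- choice of r₀
  set r₀ : ℝ := min (min c 1 / 4) (c^2 * ι^2 / 4) with hr₀
  have hr₀pos : 0 < r₀ := by
    apply lt_min
    · have : 0 < min c 1 := lt_min hc one_pos
      linarith
    · positivity
  -- exponents and constants
  set p : ℝ := 2 * β with hpdef
  have hp : 0 < p := by simp only [hpdef]; linarith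
  have h2p : (0:ℝ) < 2 ^ p := Real.rpow_pos_of_pos (by norm_num) p
  have hminpos : 0 < min (c ^ (p-1)) 1 := lt_min (Real.rpow_pos_of_pos hc _) one_pos
  have hmaxpos : (1:ℝ) ≤ max (c ^ (1-p)) 1 := le_max_right _ _
  set C₁ : ℝ := p / (4 * 2 ^ p) * (c * min (c ^ (p-1)) 1) / β with hC₁
  set C₂ : ℝ := (p * 2 ^ p + 4) * (c⁻¹ * max (c ^ (1-p)) 1) / β with hC₂
  have hC₁pos : 0 < C₁ := by
    simp only [hC₁]
    positivity
  have hC₁C₂ : C₁ ≤ C₂ := by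
    have h2p1 : (1:ℝ) ≤ 2 ^ p := by
      have := Real.rpow_le_rpow_left_iff (x := (2:ℝ)) (by norm_num) |>.mpr hp.le
      rwa [Real.rpow_zero] at this
    have hA : p / (4 * 2 ^ p) ≤ p * 2 ^ p + 4 := by
      rw [div_le_iff₀ (by positivity)]
      have hq2 : (1:ℝ) ≤ 2^p * 2^p := by nlinarith
      nlinarith [mul_le_mul_of_nonneg_left hq2 hp.le, mul_pos hp h2p, h2p1]
    have hB : c * min (c ^ (p-1)) 1 ≤ c⁻¹ * max (c ^ (1-p)) 1 := by
      have h1 : c * min (c ^ (p-1)) 1 ≤ 1 := by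
        have : min (c ^ (p-1)) 1 ≤ 1 := min_le_right _ _
        nlinarith
      have h2 : (1:ℝ) ≤ c⁻¹ * max (c ^ (1-p)) 1 := by nlinarith
      linarith
    simp only [hC₁, hC₂]
    gcongr
    all_goals first
      | exact hA
      | exact hB
      | exact le_trans (by positivity : (0:ℝ) ≤ c * min (c ^ (p-1)) 1) hB
      | positivity
  refine ⟨C₁, C₂, r₀, hC₁pos, hC₁C₂, hr₀pos, ?_⟩
  intro x0 hx0 r hr
  obtain ⟨hx00, hx0r₀⟩ := hx0
  obtain ⟨hr0, hrr₀⟩ := hr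
  -- basic size facts
  have hr₀c : r₀ ≤ c / 4 := le_trans (min_le_left _ _) (by
    have : min c 1 ≤ c := min_le_left _ _
    linarith)
  have hr₀14 : r₀ ≤ 1 / 4 := le_trans (min_le_left _ _) (by
    have : min c 1 ≤ 1 := min_le_right _ _
    linarith)
  have hrc8 : r < c / 8 := lt_of_lt_of_le hrr₀ (by linarith)
  set A : ℝ := Real.sqrt x0 with hA
  have hA0 : 0 ≤ A := Real.sqrt_nonneg _
  have hAsq : A ^ 2 = x0 := Real.sq_sqrt hx00
  have hA12 : A ≤ 1 / 2 := by nlinarith [sq_nonneg (A - 1/2)]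
  have hrcd : r / c < 1 / 8 := by rw [div_lt_iff₀ hc]; nlinarith
  have hrc0 : 0 < r / c := by positivity
  have hcr0 : 0 < c * r := by positivity
  have hcrr : c * r ≤ r := by nlinarith
  have hrrc : r ≤ r / c := by rw [le_div_iff₀ hc]; nlinarith
  have hu2le : A + r / c ≤ 5 / 8 := by linarith
  -- points of the ball are ≤ 1
  have hρ0x0 : ρ 0 x0 ≤ c⁻¹ * A := by
    have hx0Icc : x0 ∈ Set.Icc (0:ℝ) 1 := ⟨hx00, by linarith⟩
    have := (hcomp1 0 h0Icc x0 hx0Icc).2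
    rw [Real.sqrt_zero, ← hA] at this
    rwa [abs_sub_comm, sub_zero, abs_of_nonneg hA0] at this
  have hAsmall : A ≤ c * ι / 2 := by
    have h1 : r₀ ≤ (c * ι / 2) ^ 2 := le_trans (min_le_right _ _) (by nlinarith)
    have h2 : A ≤ Real.sqrt ((c * ι / 2)^2) := by
      rw [hA]; exact Real.sqrt_le_sqrt (le_trans hx0r₀ h1)
    rwa [Real.sqrt_sq (by positivity)] at h2
  have hrι : r < ι / 2 := by
    have h1 : r₀ / 2 ≤ c^2 * ι^2 / 8 := by
      have := min_le_right (min c 1 / 4) (c^2 * ι^2 / 4)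
      rw [← hr₀] at this
      linarith
    have h2 : c^2 * ι ≤ c := by
      have ha := mul_le_mul_of_nonneg_left hιc (sq_nonneg c)
      have hb : c^2 * c⁻¹ = c := by
        rw [pow_two, mul_assoc, hcc, mul_one]
      linarith only [ha, hb.ge, hb.le]
    have h3 : c^2 * ι^2 ≤ c * ι := by
      have := mul_le_mul_of_nonneg_right h2 hιpos.le
      nlinarith only [this]
    have h4 : c * ι ≤ ι := by
      nlinarith only [mul_le_mul_of_nonneg_right hc1 hιpos.le]
    linarith only [h1, h3, h4, hrr₀, hιpos]
  have hball1 : ∀ x : ℝ, 0 ≤ x → ρ x0 x < r → x ≤ 1 := by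
    intro x hx hρ
    by_contra hx1
    push_neg at hx1
    have hx1' : x ∈ Set.Ici (1:ℝ) := hx1.le
    have htr := htri 0 hmem0 x0 hx00 x hx
    have hfx := hfar x hx1'
    have hcA : c⁻¹ * A ≤ ι / 2 := by
      calc c⁻¹ * A ≤ c⁻¹ * (c * ι / 2) :=
            mul_le_mul_of_nonneg_left hAsmall hcinv.le
        _ = ι / 2 := by field_simp
    linarith
  -- interval endpoints in square-root coordinates
  set l₁ : ℝ := max (A - c*r) 0 with hl₁
  set u₁ : ℝ := A + c*r with hu₁
  set l₂ : ℝ := max (A - r/c) 0 with hl₂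
  set u₂ : ℝ := A + r/c with hu₂
  have hl₁0 : 0 ≤ l₁ := le_max_right _ _
  have hl₂0 : 0 ≤ l₂ := le_max_right _ _
  have hl₁u₁ : l₁ ≤ u₁ := max_le (by simp only [hu₁]; linarith) (by positivity)
  have hl₂u₂ : l₂ ≤ u₂ := max_le (by simp only [hu₂]; linarith) (by positivity)
  have hu₁u₂ : u₁ ≤ u₂ := by simp only [hu₁, hu₂]; linarith
  have hu₂1 : u₂ ≤ 1 := by simp only [hu₂]; linarith
  set B : Set ℝ := {x : ℝ | 0 ≤ x ∧ ρ x0 x < r} with hBdef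
  have hx0Icc : x0 ∈ Set.Icc (0:ℝ) 1 := ⟨hx00, by linarith⟩
  -- lower inclusion
  have hsub₁ : Set.Ioo (l₁^2) (u₁^2) ⊆ B := by
    intro x hx
    have hx0' : 0 ≤ x := le_trans (by positivity) hx.1.le
    have hu₁pos : 0 < u₁ := by simp only [hu₁]; positivity
    have hsx1 : Real.sqrt x < u₁ := (Real.sqrt_lt' hu₁pos).mpr hx.2
    have hsx2 : l₁ < Real.sqrt x := (Real.lt_sqrt hl₁0).mpr hx.1
    have hxle1 : x ≤ 1 := by
      have h1 : u₁^2 ≤ u₂^2 := by nlinarith only [hu₁u₂, hl₁u₁, hl₁0]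
      have h2 : u₂^2 ≤ 1 := by nlinarith only [hu₂1, hl₂u₂, hl₂0]
      linarith [hx.2]
    have hdiff : |A - Real.sqrt x| < c * r := by
      rw [abs_lt]
      constructor
      · simp only [hu₁] at hsx1; linarith
      · have : A - c*r ≤ l₁ := le_max_left _ _
        linarith
    refine ⟨hx0', ?_⟩
    have hcompx := (hcomp1 x0 hx0Icc x ⟨hx0', hxle1⟩).2
    rw [← hA] at hcompx
    calc ρ x0 x ≤ c⁻¹ * |A - Real.sqrt x| := hcompx
      _ < c⁻¹ * (c * r) := mul_lt_mul_of_pos_left hdiff hcinv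
      _ = r := by field_simp
  -- upper inclusion
  have hsub₂ : B ⊆ Set.Icc (l₂^2) (u₂^2) := by
    intro x hxB
    obtain ⟨hx0', hρx⟩ := hxB
    have hxle1 : x ≤ 1 := hball1 x hx0' hρx
    have hcompx := (hcomp1 x0 hx0Icc x ⟨hx0', hxle1⟩).1
    rw [← hA] at hcompx
    have hdiff : |A - Real.sqrt x| < r / c := by
      rw [lt_div_iff₀ hc]
      calc |A - Real.sqrt x| * c = c * |A - Real.sqrt x| := mul_comm _ _
        _ ≤ ρ x0 x := hcompx
        _ < r := hρx
    rw [abs_lt] at hdiff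
    have hsx : Real.sqrt x ≤ u₂ := by simp only [hu₂]; linarith [hdiff.1]
    have hsx2 : l₂ ≤ Real.sqrt x :=
      max_le (by linarith [hdiff.2]) (Real.sqrt_nonneg x)
    have hxeq : Real.sqrt x ^ 2 = x := Real.sq_sqrt hx0'
    constructor
    · nlinarith only [hsx2, hl₂0, hxeq, Real.sqrt_nonneg x]
    · nlinarith only [hsx, hxeq, Real.sqrt_nonneg x]
  -- integrability
  have hInt01 : IntegrableOn (fun x : ℝ => x ^ (β - 1)) (Set.Icc 0 1) volume :=
    (intervalIntegrable_iff_integrableOn_Icc_of_le (by norm_num)).mp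
      (intervalIntegral.intervalIntegrable_rpow' (by linarith))
  have hB01 : B ⊆ Set.Icc 0 1 := fun x hx => ⟨hx.1, hball1 x hx.1 hx.2⟩
  have hIntB : IntegrableOn (fun x : ℝ => x ^ (β - 1)) B volume := hInt01.mono_set hB01
  have hIcc01 : Set.Icc (l₂^2) (u₂^2) ⊆ Set.Icc 0 1 := fun x hx =>
    ⟨le_trans (by positivity) hx.1,
      le_trans hx.2 (by nlinarith only [hu₂1, hl₂u₂, hl₂0])⟩
  -- monotonicity of the set integrals
  have hnonnegB : 0 ≤ᵐ[volume.restrict B] fun x : ℝ => x ^ (β - 1) := by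
    have hres : volume.restrict B ≤ volume.restrict (Set.Icc (0:ℝ) 1) :=
      Measure.restrict_mono hB01 le_rfl
    refine Filter.Eventually.filter_mono (ae_mono hres) ?_
    exact ae_restrict_of_forall_mem measurableSet_Icc
      (fun x hx => Real.rpow_nonneg hx.1 _)
  have hlow : (∫ x in Set.Ioo (l₁^2) (u₁^2), x ^ (β-1)) ≤ ∫ x in B, x ^ (β-1) :=
    setIntegral_mono_set hIntB hnonnegB hsub₁.eventuallyLE
  have hupint : (∫ x in B, x ^ (β-1)) ≤ ∫ x in Set.Icc (l₂^2) (u₂^2), x ^ (β-1) := by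
    refine setIntegral_mono_set (hInt01.mono_set hIcc01) ?_ hsub₂.eventuallyLE
    exact ae_restrict_of_forall_mem measurableSet_Icc
      (fun x hx => Real.rpow_nonneg (le_trans (by positivity) hx.1) _)
  -- evaluation of the two integrals
  have hIooval : (∫ x in Set.Ioo (l₁^2) (u₁^2), x ^ (β-1)) = (u₁^p - l₁^p)/β := by
    rw [← MeasureTheory.integral_Ioc_eq_integral_Ioo, kimura_eval β hβ hl₁0 hl₁u₁, hpdef]
  have hIccval : (∫ x in Set.Icc (l₂^2) (u₂^2), x ^ (β-1)) = (u₂^p - l₂^p)/β := by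
    rw [MeasureTheory.integral_Icc_eq_integral_Ioc, kimura_eval β hβ hl₂0 hl₂u₂, hpdef]
  -- core bounds
  set m : ℝ := max A r with hm
  have hmpos : 0 < m := lt_of_lt_of_le hr0 (le_max_right _ _)
  have hmp : (0:ℝ) < m ^ (p-1) := Real.rpow_pos_of_pos hmpos _
  set m₁ : ℝ := max A (c*r) with hm₁
  have hm₁pos : 0 < m₁ := lt_of_lt_of_le hcr0 (le_max_right _ _)
  set m₂ : ℝ := max A (r/c) with hm₂
  have hm₂pos : 0 < m₂ := lt_of_lt_of_le hrc0 (le_max_right _ _)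
  have e1 : c*r ≤ u₁ - l₁ := by
    have h : l₁ ≤ A := max_le (by linarith) hA0
    simp only [hu₁]; linarith
  have e2 : u₁ - l₁ ≤ 2*(c*r) := by
    have h : A - c*r ≤ l₁ := le_max_left _ _
    simp only [hu₁]; linarith
  have e3 : m₁ ≤ u₁ :=
    max_le (by simp only [hu₁]; linarith) (by simp only [hu₁]; linarith)
  have e4 : u₁ ≤ 2*m₁ := by
    have h5 : A ≤ m₁ := le_max_left _ _
    have h6 : c*r ≤ m₁ := le_max_right _ _
    simp only [hu₁]; linarith
  have hcore₁ := (kimura_core p hp hl₁0 e1 e2 hm₁pos e3 e4 hcr0).1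
  have f1 : r/c ≤ u₂ - l₂ := by
    have h : l₂ ≤ A := max_le (by linarith) hA0
    simp only [hu₂]; linarith
  have f2 : u₂ - l₂ ≤ 2*(r/c) := by
    have h : A - r/c ≤ l₂ := le_max_left _ _
    simp only [hu₂]; linarith
  have f3 : m₂ ≤ u₂ :=
    max_le (by simp only [hu₂]; linarith) (by simp only [hu₂]; linarith)
  have f4 : u₂ ≤ 2*m₂ := by
    have h5 : A ≤ m₂ := le_max_left _ _
    have h6 : r/c ≤ m₂ := le_max_right _ _
    simp only [hu₂]; linarith
  have hcore₂ := (kimura_core p hp hl₂0 f1 f2 hm₂pos f3 f4 hrc0).2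
  -- conversion between m₁, m₂ and m
  have hconv₁ : min (c^(p-1)) 1 * m^(p-1) ≤ m₁^(p-1) := by
    rcases le_or_gt 1 p with h1 | h1
    · have hle : c * m ≤ m₁ := by
        rcases le_total A r with h | h
        · rw [hm, max_eq_right h]
          exact le_max_right _ _
        · rw [hm, max_eq_left h]
          have h7 : c * A ≤ A := by nlinarith only [hc1, hA0, hc.le]
          exact le_trans h7 (le_max_left _ _)
      have h2' : (c*m)^(p-1) ≤ m₁^(p-1) :=
        Real.rpow_le_rpow (by positivity) hle (by linarith)
      have h3' : (c*m)^(p-1) = c^(p-1) * m^(p-1) := Real.mul_rpow hc.le hmpos.le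
      have h4' : min (c^(p-1)) 1 * m^(p-1) ≤ c^(p-1) * m^(p-1) :=
        mul_le_mul_of_nonneg_right (min_le_left _ _) hmp.le
      rw [h3'] at h2'
      linarith
    · have hle : m₁ ≤ m := by
        rw [hm, hm₁]
        exact max_le (le_max_left _ _) (le_trans hcrr (le_max_right _ _))
      have h2' : m^(p-1) ≤ m₁^(p-1) :=
        Real.rpow_le_rpow_of_nonpos hm₁pos hle (by linarith)
      have h4' : min (c^(p-1)) 1 * m^(p-1) ≤ 1 * m^(p-1) :=
        mul_le_mul_of_nonneg_right (min_le_right _ _) hmp.le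
      rw [one_mul] at h4'
      linarith
  have hconv₂ : m₂^(p-1) ≤ max (c^(1-p)) 1 * m^(p-1) := by
    rcases le_or_gt 1 p with h1 | h1
    · have hrm : r ≤ m := le_max_right _ _
      have hAm : A ≤ m := le_max_left _ _
      have hle : m₂ ≤ m / c := by
        apply max_le
        · calc A ≤ m := hAm
            _ ≤ m / c := by
              rw [le_div_iff₀ hc]
              nlinarith only [hc1, hmpos.le, hc]
        · rw [div_le_div_iff_of_pos_right hc] <;> try exact hrm
      have h2' : m₂^(p-1) ≤ (m/c)^(p-1) :=
        Real.rpow_le_rpow (by positivity) hle (by linarith)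
      have h3' : (m/c)^(p-1) = m^(p-1) / c^(p-1) := Real.div_rpow hmpos.le hc.le _
      have h4' : m^(p-1)/c^(p-1) = c^(1-p) * m^(p-1) := by
        rw [show (1-p : ℝ) = -(p-1) by ring, Real.rpow_neg hc.le]
        rw [div_eq_mul_inv, mul_comm]
      have h5' : c^(1-p) * m^(p-1) ≤ max (c^(1-p)) 1 * m^(p-1) :=
        mul_le_mul_of_nonneg_right (le_max_left _ _) hmp.le
      rw [h3', h4'] at h2'
      linarith
    · have hle : m ≤ m₂ := by
        rw [hm, hm₂]
        exact max_le (le_max_left _ _) (le_trans hrrc (le_max_right _ _))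
      have h2' : m₂^(p-1) ≤ m^(p-1) :=
        Real.rpow_le_rpow_of_nonpos hmpos hle (by linarith)
      have h5' : m^(p-1) ≤ max (c^(1-p)) 1 * m^(p-1) := by
        nlinarith only [hmaxpos, hmp.le]
      linarith
  -- final assembly
  have hβ' : β ≠ 0 := hβ.ne'
  have hden : (4 * (2:ℝ)^p) ≠ 0 := by positivity
  constructor
  · -- lower bound
    have step1 : C₁ * r * m^(p-1) ≤ (u₁^p - l₁^p)/β := by
      have hB1 : p/(4*2^p) * (c*r * (min (c^(p-1)) 1 * m^(p-1)))
          ≤ p/(4*2^p) * (c*r * m₁^(p-1)) := by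
        apply mul_le_mul_of_nonneg_left _ (by positivity)
        exact mul_le_mul_of_nonneg_left hconv₁ hcr0.le
      have heq : C₁ * r * m^(p-1)
          = (p/(4*2^p) * (c*r * (min (c^(p-1)) 1 * m^(p-1))))/β := by
        rw [hC₁]
        field_simp
      rw [heq]
      gcongr
      exact le_trans hB1 hcore₁
    calc C₁ * r * m^(p-1) ≤ (u₁^p - l₁^p)/β := step1
      _ = ∫ x in Set.Ioo (l₁^2) (u₁^2), x ^ (β-1) := hIooval.symm
      _ ≤ ∫ x in B, x ^ (β-1) := hlow
  · -- upper bound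
    have step2 : (u₂^p - l₂^p)/β ≤ C₂ * r * m^(p-1) := by
      have hB2 : (p*2^p+4) * (r/c * m₂^(p-1))
          ≤ (p*2^p+4) * (r/c * (max (c^(1-p)) 1 * m^(p-1))) := by
        apply mul_le_mul_of_nonneg_left _ (by positivity)
        exact mul_le_mul_of_nonneg_left hconv₂ hrc0.le
      have heq : C₂ * r * m^(p-1)
          = ((p*2^p+4) * (r/c * (max (c^(1-p)) 1 * m^(p-1))))/β := by
        rw [hC₂]
        field_simp
      rw [heq]
      gcongr
      exact le_trans hcore₂ hB2
    calc (∫ x in B, x ^ (β-1)) ≤ ∫ x in Set.Icc (l₂^2) (u₂^2), x ^ (β-1) := hupint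
      _ = (u₂^p - l₂^p)/β := hIccval
      _ ≤ C₂ * r * m^(p-1) := step2
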